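/- Let X be a complex Banach space which is M-embedded. Then X has the unique extension property: the only contractive linear operator T on X** satisfying T(i_X(x)) = i_X(x) for all x ∈ X is the identity operator on X**. -/

import Mathlib

open NormedSpace

noncomputable section

set_option maxHeartbeats 1000000

instance strongDualSeminormedAddCommGroupC {E : Type*} [SeminormedAddCommGroup E]
    [NormedSpace ℂ E] : SeminormedAddCommGroup (StrongDual ℂ E) :=
  ContinuousLinearMap.toSeminormedAddCommGroup

instance strongDualNormedSpaceC {E : Type*} [SeminormedAddCommGroup E]
    [NormedSpace ℂ E] : NormedSpace ℂ (StrongDual ℂ E) :=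
  ContinuousLinearMap.toNormedSpace

/-- The transpose (dual map) of a continuous linear map between (semi)normed spaces:
`ctranspose f` sends a functional `g` to `g ∘ f`. -/
def ctranspose {E F : Type*} [SeminormedAddCommGroup E] [NormedSpace ℂ E]
    [SeminormedAddCommGroup F] [NormedSpace ℂ F] (f : E →L[ℂ] F) :
    StrongDual ℂ F →L[ℂ] StrongDual ℂ E :=
  (ContinuousLinearMap.compL ℂ E F ℂ).flip f

/-- A bounded linear projection `P` is an L-projection if `‖z‖ = ‖P z‖ + ‖z - P z‖`
for all `z`. -/
def IsLProjection {Z : Type*} [SeminormedAddCommGroup Z] [NormedSpace ℂ Z]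
    (P : Z →L[ℂ] Z) : Prop :=
  (∀ z, P (P z) = P z) ∧ ∀ z, ‖z‖ = ‖P z‖ + ‖z - P z‖

/-- A complex Banach space `X` is M-embedded if the annihilator `i_X(X)^⊥` is an
L-summand in `X***`. -/
def MEmbedded (X : Type*) [SeminormedAddCommGroup X] [NormedSpace ℂ X] : Prop :=
  ∃ P : StrongDual ℂ (StrongDual ℂ (StrongDual ℂ X)) →L[ℂ] StrongDual ℂ (StrongDual ℂ (StrongDual ℂ X)),
    IsLProjection (Z := StrongDual ℂ (StrongDual ℂ (StrongDual ℂ X))) P ∧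
    Set.range P = {φ : StrongDual ℂ (StrongDual ℂ (StrongDual ℂ X)) |
      ∀ x : X, φ (inclusionInDoubleDual ℂ X x) = 0}

/-- A functional with zero operator norm is zero. -/
lemma dual_opNorm_eq_zero {E : Type*} [SeminormedAddCommGroup E] [NormedSpace ℂ E]
    (ψ : StrongDual ℂ E) (h : ‖ψ‖ = 0) : ψ = 0 := by
  ext ξ
  have hb := ψ.le_opNorm ξ
  rw [h, zero_mul] at hb
  simpa using le_antisymm hb (norm_nonneg _)

/-- Every M-embedded complex Banach space has the unique extension property:
the only contractive linear operator on `X**` restricting to the identity on `i_X(X)` is the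
identity operator. -/
theorem MEmbedded.unique_extension_property
    (X : Type*) [NormedAddCommGroup X] [NormedSpace ℂ X] [CompleteSpace X]
    (hX : MEmbedded X) :
    ∀ T : StrongDual ℂ (StrongDual ℂ X) →L[ℂ] StrongDual ℂ (StrongDual ℂ X), ‖T‖ ≤ 1 →
      (∀ x : X, T (inclusionInDoubleDual ℂ X x) = inclusionInDoubleDual ℂ X x) →
      T = ContinuousLinearMap.id ℂ (StrongDual ℂ (StrongDual ℂ X)) := by
  obtain ⟨P, ⟨hPidem, hPL⟩, hPrange⟩ := hX
  intro T hT hTfix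
  set i : StrongDual ℂ X →L[ℂ] StrongDual ℂ (StrongDual ℂ (StrongDual ℂ X)) :=
    inclusionInDoubleDual ℂ (StrongDual ℂ X) with hi
  have hinorm : ∀ f : StrongDual ℂ X, ‖i f‖ = ‖f‖ := fun f =>
    (inclusionInDoubleDualLi ℂ (E := StrongDual ℂ X)).norm_map f
  have hXnorm : ∀ x : X, ‖inclusionInDoubleDual ℂ X x‖ = ‖x‖ := fun x =>
    (inclusionInDoubleDualLi ℂ (E := X)).norm_map x
  -- P vanishes on the canonical image of X* in X***
  have hPi : ∀ f : StrongDual ℂ X, P (i f) = 0 := by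
    intro f
    have hmem : P (i f) ∈ Set.range P := ⟨i f, rfl⟩
    rw [hPrange] at hmem
    have hflower : ‖f‖ ≤ ‖i f - P (i f)‖ := by
      apply ContinuousLinearMap.opNorm_le_bound _ (ContinuousLinearMap.opNorm_nonneg _)
      intro x
      have : f x = (i f - P (i f)) (inclusionInDoubleDual ℂ X x) := by
        rw [ContinuousLinearMap.sub_apply, hmem x, sub_zero]
        simp [hi, NormedSpace.dual_def]
      rw [this]
      calc ‖(i f - P (i f)) (inclusionInDoubleDual ℂ X x)‖
          ≤ ‖i f - P (i f)‖ * ‖inclusionInDoubleDual ℂ X x‖ :=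
            (i f - P (i f)).le_opNorm _
        _ = ‖i f - P (i f)‖ * ‖x‖ := by rw [hXnorm]
    have hL := hPL (i f)
    rw [hinorm] at hL
    have : ‖P (i f)‖ ≤ 0 := by linarith
    have h0 := le_antisymm this (ContinuousLinearMap.opNorm_nonneg _)
    exact dual_opNorm_eq_zero _ h0
  -- the transpose of T fixes the canonical image of X*
  have hkey : ∀ f : StrongDual ℂ X, ctranspose T (i f) = i f := by
    intro f
    set z := ctranspose T (i f) with hz
    have hzapp : ∀ ξ, z ξ = (i f) (T ξ) := fun ξ => rfl
    set p := z - i f with hp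
    have hpmem : p ∈ Set.range P := by
      rw [hPrange]
      intro x
      have : p (inclusionInDoubleDual ℂ X x)
          = (i f) (T (inclusionInDoubleDual ℂ X x)) - (i f) (inclusionInDoubleDual ℂ X x) := by
        simp [hp, hzapp]
      rw [this, hTfix x, sub_self]
    have hPp : P p = p := by
      obtain ⟨w, hw⟩ := hpmem
      rw [← hw, hPidem]
    have hPz : P z = p := by
      have : z = i f + p := by rw [hp]; abel
      rw [this, map_add, hPi, hPp, zero_add]
    have hL := hPL z
    have hzsub : z - p = i f := by rw [hp]; abel
    rw [hPz, hzsub, hinorm] at hL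
    have hzle : ‖z‖ ≤ ‖f‖ := by
      have h1 : ‖z‖ ≤ ‖i f‖ * ‖T‖ := by
        have : z = (i f).comp T := rfl
        rw [this]
        exact ContinuousLinearMap.opNorm_comp_le _ _
      calc ‖z‖ ≤ ‖i f‖ * ‖T‖ := h1
        _ ≤ ‖f‖ * 1 := by
            rw [hinorm]
            exact mul_le_mul_of_nonneg_left hT (norm_nonneg f)
        _ = ‖f‖ := mul_one _
    have hp0 : ‖p‖ ≤ 0 := by linarith
    have hp0' : p = 0 := dual_opNorm_eq_zero p (le_antisymm hp0 (norm_nonneg p))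
    have : z - i f = 0 := hp0'
    exact sub_eq_zero.mp this
  -- conclude T = id
  ext ξ f
  have := congrArg (fun ψ => ψ ξ) (hkey f)
  simpa [ctranspose, NormedSpace.dual_def, hi] using this
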